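/- arXiv:2406.00564 — 2 statements merged into one kernel-verified Lean document; each statement's English description precedes it below -/
import Mathlib

section
/- Let A : ℝ^m → 2^{ℝ^m} be a maximal monotone operator with a ∈ interior(D(A)). Then there exist constants M₁ > 0 and M₂, M₃ ≥ 0 such that for every continuous X : [0,T] → closure(D(A)) and continuous bounded-variation K : [0,T] → ℝ^m with K₀ = 0 satisfying ⟨X_t − x, dK_t − y dt⟩ ≥ 0 for all (x,y) ∈ Gr(A), and all 0 ≤ s < t ≤ T: ∫_s^t ⟨X_r − a, dK_r⟩ ≥ M₁ |K|_s^t − M₂ ∫_s^t |X_r − a| dr − M₃ (t − s), where |K|_s^t denotes the total variation of K on [s,t]. -/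
open MeasureTheory Set
open scoped RealInnerProductSpace


lemma locBound {m : ℕ} (hm : 0 < m)
    (A : EuclideanSpace ℝ (Fin m) → Set (EuclideanSpace ℝ (Fin m)))
    (hmono : ∀ x₁ x₂ y₁ y₂ : EuclideanSpace ℝ (Fin m),
      y₁ ∈ A x₁ → y₂ ∈ A x₂ → 0 ≤ ⟪x₁ - x₂, y₁ - y₂⟫)
    (a : EuclideanSpace ℝ (Fin m)) (ε : ℝ) (hε : 0 < ε)
    (hD : Metric.ball a ε ⊆ {x | (A x).Nonempty}) :
    ∃ M ≥ (0:ℝ), ∀ x y, ‖x - a‖ ≤ ε / (4 * Real.sqrt m) → y ∈ A x → ‖y‖ ≤ M := by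
  have hsm : (1:ℝ) ≤ Real.sqrt m := by
    rw [show (1:ℝ) = Real.sqrt 1 by simp]
    exact Real.sqrt_le_sqrt (by exact_mod_cast hm)
  have hsm0 : (0:ℝ) < Real.sqrt m := lt_of_lt_of_le one_pos hsm
  set r₀ : ℝ := ε / 2 with hr₀
  have hr₀pos : 0 < r₀ := by positivity
  set ρ : ℝ := ε / (4 * Real.sqrt m) with hρ
  have hρpos : 0 < ρ := by positivity
  have hρr₀ : ρ = r₀ / (2 * Real.sqrt m) := by
    rw [hρ, hr₀]; ring
  have hρle : ρ ≤ r₀ := by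
    rw [hρr₀]
    calc r₀ / (2 * Real.sqrt m) ≤ r₀ / 2 := by
          apply div_le_div_of_nonneg_left hr₀pos.le two_pos
          nlinarith
      _ ≤ r₀ := by linarith
  -- test points
  set p : Fin m → Bool → EuclideanSpace ℝ (Fin m) :=
    fun i b => a + ((if b then r₀ else -r₀) • EuclideanSpace.single i (1:ℝ)) with hp
  have hpnorm : ∀ i b, ‖p i b - a‖ = r₀ := by
    intro i b
    rw [hp]
    simp only [add_sub_cancel_left, norm_smul, EuclideanSpace.norm_single, norm_one, mul_one]
    cases b
    · rw [Real.norm_eq_abs, if_neg (by simp), abs_neg, abs_of_pos hr₀pos]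
    · rw [Real.norm_eq_abs, if_pos rfl, abs_of_pos hr₀pos]
  have hpball : ∀ i b, p i b ∈ Metric.ball a ε := by
    intro i b
    rw [Metric.mem_ball, dist_eq_norm, hpnorm i b, hr₀]
    linarith
  have hsel : ∀ i b, ∃ y, y ∈ A (p i b) := fun i b => hD (hpball i b)
  choose sel hselmem using hsel
  set C : ℝ := ∑ i : Fin m, (‖sel i true‖ + ‖sel i false‖) with hC
  have hCnn : 0 ≤ C := Finset.sum_nonneg fun i _ => by positivity
  have hselC : ∀ i b, ‖sel i b‖ ≤ C := by
    intro i b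
    have h1 : ‖sel i b‖ ≤ ‖sel i true‖ + ‖sel i false‖ := by
      cases b
      · exact le_add_of_nonneg_left (norm_nonneg _)
      · exact le_add_of_nonneg_right (norm_nonneg _)
    refine h1.trans ?_
    exact Finset.single_le_sum (f := fun i => ‖sel i true‖ + ‖sel i false‖)
      (fun i _ => by positivity) (Finset.mem_univ i)
  refine ⟨4 * Real.sqrt m * C, by positivity, ?_⟩
  intro x y hx hy
  rcases eq_or_ne y 0 with rfl | hy0
  · simpa using (by positivity : (0:ℝ) ≤ 4 * Real.sqrt m * C)
  have hynorm : 0 < ‖y‖ := norm_pos_iff.mpr hy0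
  -- find best coordinate
  obtain ⟨i, -, hi⟩ := Finset.exists_max_image Finset.univ (fun j => |y j|)
    ⟨⟨0, hm⟩, Finset.mem_univ _⟩
  have hycoord : ‖y‖ ≤ Real.sqrt m * |y i| := by
    have h1 : ‖y‖ = Real.sqrt (∑ j, ‖y j‖ ^ 2) := EuclideanSpace.norm_eq y
    have h2 : (∑ j, ‖y j‖ ^ 2) ≤ (m : ℝ) * |y i| ^ 2 := by
      calc (∑ j, ‖y j‖ ^ 2) ≤ ∑ _j : Fin m, |y i| ^ 2 := by
            apply Finset.sum_le_sum
            intro j _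
            rw [Real.norm_eq_abs]
            exact pow_le_pow_left₀ (abs_nonneg _) (hi j (Finset.mem_univ j)) 2
        _ = (m : ℝ) * |y i| ^ 2 := by
            rw [Finset.sum_const, Finset.card_univ, Fintype.card_fin, nsmul_eq_mul]
    calc ‖y‖ = Real.sqrt (∑ j, ‖y j‖ ^ 2) := h1
      _ ≤ Real.sqrt ((m : ℝ) * |y i| ^ 2) := Real.sqrt_le_sqrt h2
      _ = Real.sqrt m * |y i| := by
          rw [Real.sqrt_mul (by positivity), Real.sqrt_sq_eq_abs, abs_abs]
  set b : Bool := decide (0 ≤ y i) with hb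
  have hsign : (if b then r₀ else -r₀) * y i = r₀ * |y i| := by
    by_cases h : 0 ≤ y i
    · simp [hb, h, abs_of_nonneg h]
    · rw [hb, if_neg (by simp [h]), abs_of_neg (lt_of_not_ge h)]
      ring
  -- monotonicity bound
  have hmono' := hmono x (p i b) y (sel i b) hy (hselmem i b)
  have hineq : ⟪p i b - x, y⟫ ≤ ⟪p i b - x, sel i b⟫ := by
    have h0 : (0:ℝ) ≤ ⟪p i b - x, sel i b - y⟫ := by
      rw [show x - p i b = -(p i b - x) from (neg_sub _ _).symm,
        show y - sel i b = -(sel i b - y) from (neg_sub _ _).symm, inner_neg_neg] at hmono'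
      exact hmono'
    rw [inner_sub_right] at h0
    linarith
  -- upper bound on RHS
  have hub : ⟪p i b - x, sel i b⟫ ≤ 2 * r₀ * C := by
    calc ⟪p i b - x, sel i b⟫ ≤ ‖p i b - x‖ * ‖sel i b‖ := real_inner_le_norm _ _
      _ ≤ (r₀ + ρ) * C := by
          apply mul_le_mul _ (hselC i b) (norm_nonneg _) (by positivity)
          calc ‖p i b - x‖ = ‖(p i b - a) + (a - x)‖ := by
                rw [show p i b - x = (p i b - a) + (a - x) by abel]
            _ ≤ ‖p i b - a‖ + ‖a - x‖ := norm_add_le _ _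
            _ ≤ r₀ + ρ := by
                apply add_le_add
                · rw [hpnorm i b]
                · rwa [norm_sub_rev]
      _ ≤ 2 * r₀ * C := by nlinarith
  -- lower bound on LHS
  have hlb : r₀ / (2 * Real.sqrt m) * ‖y‖ ≤ ⟪p i b - x, y⟫ := by
    have hsingle : ⟪EuclideanSpace.single i (1:ℝ), y⟫ = y i := by
      rw [EuclideanSpace.inner_single_left]; simp
    have e1 : ⟪p i b - x, y⟫ = ⟪a - x, y⟫ + (if b then r₀ else -r₀) * y i := by
      rw [hp]
      have h5 : a + (if b then r₀ else -r₀) • EuclideanSpace.single i (1:ℝ) - x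
          = (a - x) + (if b then r₀ else -r₀) • EuclideanSpace.single i (1:ℝ) := by abel
      rw [h5, inner_add_left, real_inner_smul_left, hsingle]
    have e2 : -(ρ * ‖y‖) ≤ ⟪a - x, y⟫ := by
      have := abs_real_inner_le_norm (a - x) y
      have h3 : ‖a - x‖ * ‖y‖ ≤ ρ * ‖y‖ := by
        apply mul_le_mul_of_nonneg_right _ (norm_nonneg _)
        rwa [norm_sub_rev]
      have := abs_le.mp this
      linarith [this.1]
    have e3 : r₀ / Real.sqrt m * ‖y‖ ≤ r₀ * |y i| := by
      rw [div_mul_eq_mul_div, div_le_iff₀ hsm0, mul_comm (r₀ * |y i|) _]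
      calc r₀ * ‖y‖ ≤ r₀ * (Real.sqrt m * |y i|) := by
            exact mul_le_mul_of_nonneg_left hycoord hr₀pos.le
        _ = Real.sqrt ↑m * (r₀ * |y i|) := by ring
    rw [e1, hsign]
    have : r₀ / (2 * Real.sqrt m) * ‖y‖ = r₀ / Real.sqrt m * ‖y‖ - ρ * ‖y‖ := by
      rw [hρr₀]; field_simp; ring
    linarith
  -- combine
  have key : r₀ / (2 * Real.sqrt m) * ‖y‖ ≤ 2 * r₀ * C := le_trans hlb (le_trans hineq hub)
  rw [div_mul_eq_mul_div, div_le_iff₀ (by positivity)] at key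
  rw [show (4:ℝ) * Real.sqrt m * C = (2 * r₀ * C * (2 * Real.sqrt m)) / r₀ by field_simp; ring]
  rw [le_div_iff₀ hr₀pos]
  nlinarith


lemma sum_setIntegral_Ioc {F : Type*} [NormedAddCommGroup F] [NormedSpace ℝ F]
    (μ : Measure ℝ) (f : ℝ → F) (g : ℕ → ℝ) (hg : Monotone g) (N : ℕ)
    (hint : IntegrableOn f (Set.Ioc (g 0) (g N)) μ) :
    ∑ i ∈ Finset.range N, ∫ r in Set.Ioc (g i) (g (i+1)), f r ∂μ
      = ∫ r in Set.Ioc (g 0) (g N), f r ∂μ := by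
  induction N with
  | zero => simp
  | succ n ih =>
    have hsub1 : Set.Ioc (g 0) (g n) ⊆ Set.Ioc (g 0) (g (n+1)) :=
      Set.Ioc_subset_Ioc le_rfl (hg (Nat.le_succ n))
    have hsub2 : Set.Ioc (g n) (g (n+1)) ⊆ Set.Ioc (g 0) (g (n+1)) :=
      Set.Ioc_subset_Ioc (hg (Nat.zero_le n)) le_rfl
    rw [Finset.sum_range_succ, ih (hint.mono_set hsub1),
      ← MeasureTheory.setIntegral_union (Set.Ioc_disjoint_Ioc_of_le le_rfl) measurableSet_Ioc
        (hint.mono_set hsub1) (hint.mono_set hsub2),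
      Set.Ioc_union_Ioc_eq_Ioc (hg (Nat.zero_le n)) (hg (Nat.le_succ n))]

lemma approx_var {m : ℕ} (μ : Measure ℝ) [IsFiniteMeasure μ]
    (k : ℝ → EuclideanSpace ℝ (Fin m)) (hk : Integrable k μ) (hk1 : ∀ᵐ r ∂μ, ‖k r‖ = 1)
    (s t : ℝ) (hst : s < t) (ε : ℝ) (hε : 0 < ε) :
    ∃ (N : ℕ) (g : ℕ → ℝ), Monotone g ∧ g 0 = s ∧ g N = t ∧
      (μ (Set.Ioc s t)).toReal - 4*ε ≤
        ∑ i ∈ Finset.range N, ‖∫ r in Set.Ioc (g i) (g (i+1)), k r ∂μ‖ := by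
  obtain ⟨c, -, hc, hcont, hcint⟩ := hk.exists_hasCompactSupport_integral_sub_le hε
  set ε' : ℝ := ε / ((μ Set.univ).toReal + 1) with hε'def
  have hμuniv : (0:ℝ) ≤ (μ Set.univ).toReal := ENNReal.toReal_nonneg
  have hε' : 0 < ε' := by positivity
  -- uniform continuity of c on [s,t]
  have hUC : UniformContinuousOn c (Set.Icc s t) :=
    (isCompact_Icc).uniformContinuousOn_of_continuous hcont.continuousOn
  obtain ⟨δ, hδpos, hδ⟩ := (Metric.uniformContinuousOn_iff).mp hUC ε' hε'
  -- choose N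
  obtain ⟨N, hN⟩ := exists_nat_gt (max ((t - s)/δ) 0)
  have hNpos : 0 < N := by
    by_contra h
    push_neg at h
    interval_cases N
    simp at hN
  have hNR : (0:ℝ) < N := by exact_mod_cast hNpos
  set Δ : ℝ := (t - s)/N with hΔdef
  have hΔpos : 0 < Δ := by
    apply div_pos (by linarith) hNR
  have hΔδ : Δ < δ := by
    rw [hΔdef, div_lt_iff₀ hNR]
    have h1 : (t - s)/δ < N := lt_of_le_of_lt (le_max_left _ _) hN
    rw [div_lt_iff₀ hδpos] at h1
    linarith [mul_comm δ (N:ℝ)]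
  set g : ℕ → ℝ := fun i => s + i * Δ with hgdef
  have hgmono : Monotone g := by
    intro i j hij
    have : (i:ℝ) ≤ j := by exact_mod_cast hij
    simp only [hgdef]
    nlinarith
  have hg0 : g 0 = s := by simp [hgdef]
  have hgN : g N = t := by
    simp only [hgdef, hΔdef]
    field_simp
    ring
  have hstep : ∀ i : ℕ, g (i+1) = g i + Δ := by
    intro i
    simp only [hgdef]
    push_cast
    ring
  refine ⟨N, g, hgmono, hg0, hgN, ?_⟩
  -- subset facts
  have hsub : ∀ i ∈ Finset.range N, Set.Ioc (g i) (g (i+1)) ⊆ Set.Icc s t := by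
    intro i hi r hr
    have h1 : s ≤ g i := by rw [← hg0]; exact hgmono (Nat.zero_le i)
    have h2 : g (i+1) ≤ t := by rw [← hgN]; exact hgmono (Finset.mem_range.mp hi)
    exact ⟨le_of_lt (lt_of_le_of_lt h1 hr.1), hr.2.trans h2⟩
  -- step (0): toReal = integral of ‖k‖
  have step0 : (μ (Set.Ioc s t)).toReal = ∫ r in Set.Ioc s t, ‖k r‖ ∂μ := by
    have : ∫ r in Set.Ioc s t, ‖k r‖ ∂μ = ∫ r in Set.Ioc s t, (1:ℝ) ∂μ :=
      setIntegral_congr_ae measurableSet_Ioc (hk1.mono fun r h _ => h)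
    rw [this, setIntegral_const, smul_eq_mul, mul_one, measureReal_def]
  -- global integrabilities
  have hkc : Integrable (fun r => ‖k r - c r‖) μ := (hk.sub hcint).norm
  have hknorm : Integrable (fun r => ‖k r‖) μ := hk.norm
  have step1 : ∫ r in Set.Ioc s t, ‖k r‖ ∂μ
      = ∑ i ∈ Finset.range N, ∫ r in Set.Ioc (g i) (g (i+1)), ‖k r‖ ∂μ := by
    have h1 := sum_setIntegral_Ioc μ (fun r => ‖k r‖) g hgmono N hknorm.integrableOn
    rw [hg0, hgN] at h1
    exact h1.symm
  -- key per-piece inequality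
  have key : ∀ i ∈ Finset.range N,
      ∫ r in Set.Ioc (g i) (g (i+1)), ‖k r‖ ∂μ ≤
        ‖∫ r in Set.Ioc (g i) (g (i+1)), k r ∂μ‖
        + 2 * ∫ r in Set.Ioc (g i) (g (i+1)), ‖k r - c r‖ ∂μ
        + 2 * ε' * (μ (Set.Ioc (g i) (g (i+1)))).toReal := by
    intro i hi
    set B := Set.Ioc (g i) (g (i+1)) with hBdef
    set w := c (g i) with hwdef
    have hBmeas : MeasurableSet B := measurableSet_Ioc
    have hBIcc : B ⊆ Set.Icc s t := hsub i hi
    have hgiIcc : g i ∈ Set.Icc s t :=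
      ⟨by rw [← hg0]; exact hgmono (Nat.zero_le i),
       by rw [← hgN]; exact hgmono (Finset.mem_range.mp hi).le⟩
    have hcw : ∀ r ∈ B, ‖c r - w‖ ≤ ε' := by
      intro r hr
      have hrIcc := hBIcc hr
      have h2 := hr.2
      rw [hstep i] at h2
      have hdist : dist r (g i) < δ := by
        rw [Real.dist_eq, abs_of_pos (by linarith [hr.1])]
        linarith
      have := hδ r hrIcc (g i) hgiIcc hdist
      rw [dist_eq_norm] at this
      exact this.le
    have ik : IntegrableOn k B μ := hk.integrableOn
    have iconst : ∀ v : EuclideanSpace ℝ (Fin m), IntegrableOn (fun _ => v) B μ :=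
      fun v => (integrable_const v).integrableOn
    have ikw : IntegrableOn (fun r => ‖k r - w‖) B μ :=
      ((hk.sub (integrable_const w)).norm).integrableOn
    have ikc' : IntegrableOn (fun r => ‖k r - c r‖) B μ := hkc.integrableOn
    have icw : IntegrableOn (fun r => ‖c r - w‖) B μ :=
      ((hcint.sub (integrable_const w)).norm).integrableOn
    have iconstR : ∀ v : ℝ, IntegrableOn (fun _ => v) B μ :=
      fun v => (integrable_const v).integrableOn
    have A1 : ∫ r in B, ‖k r‖ ∂μ ≤ (∫ r in B, ‖k r - w‖ ∂μ) + (μ B).toReal * ‖w‖ := by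
      have h1 : ∫ r in B, ‖k r‖ ∂μ ≤ ∫ r in B, (‖k r - w‖ + ‖w‖) ∂μ := by
        apply integral_mono ik.norm (ikw.add (iconstR ‖w‖))
        intro r
        calc ‖k r‖ = ‖(k r - w) + w‖ := by rw [sub_add_cancel]
          _ ≤ ‖k r - w‖ + ‖w‖ := norm_add_le _ _
      rwa [integral_add ikw (iconstR ‖w‖), setIntegral_const, smul_eq_mul] at h1
    have A2 : (μ B).toReal * ‖w‖ ≤ ‖∫ r in B, k r ∂μ‖ + ∫ r in B, ‖k r - w‖ ∂μ := by
      have e1 : (μ B).toReal * ‖w‖ = ‖∫ r in B, w ∂μ‖ := by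
        rw [setIntegral_const, norm_smul, Real.norm_eq_abs, abs_of_nonneg measureReal_nonneg, measureReal_def]
      rw [e1]
      have e2 : ∫ r in B, (w - k r) ∂μ = (∫ r in B, w ∂μ) - ∫ r in B, k r ∂μ :=
        integral_sub ((integrable_const w).integrableOn) ik
      have e3 : ∫ r in B, w ∂μ = (∫ r in B, k r ∂μ) + ∫ r in B, (w - k r) ∂μ := by
        rw [e2]; abel
      rw [e3]
      refine (norm_add_le _ _).trans (add_le_add le_rfl ?_)
      refine (norm_integral_le_integral_norm _).trans ?_
      apply le_of_eq
      apply integral_congr_ae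
      filter_upwards with r
      rw [norm_sub_rev]
    have A3 : ∫ r in B, ‖k r - w‖ ∂μ ≤
        (∫ r in B, ‖k r - c r‖ ∂μ) + ∫ r in B, ‖c r - w‖ ∂μ := by
      have h1 : ∫ r in B, ‖k r - w‖ ∂μ ≤ ∫ r in B, (‖k r - c r‖ + ‖c r - w‖) ∂μ := by
        apply integral_mono ikw (ikc'.add icw)
        intro r
        calc ‖k r - w‖ = ‖(k r - c r) + (c r - w)‖ := by rw [sub_add_sub_cancel]
          _ ≤ ‖k r - c r‖ + ‖c r - w‖ := norm_add_le _ _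
      rwa [integral_add ikc' icw] at h1
    have A4 : ∫ r in B, ‖c r - w‖ ∂μ ≤ ε' * (μ B).toReal := by
      have h1 := setIntegral_mono_on icw (iconstR ε') hBmeas hcw
      rwa [setIntegral_const, smul_eq_mul, mul_comm] at h1
    linarith
  -- sum everything
  have hIKC : ∑ i ∈ Finset.range N, ∫ r in Set.Ioc (g i) (g (i+1)), ‖k r - c r‖ ∂μ ≤ ε := by
    have h1 := sum_setIntegral_Ioc μ (fun r => ‖k r - c r‖) g hgmono N hkc.integrableOn
    rw [hg0, hgN] at h1
    rw [h1]
    calc ∫ r in Set.Ioc s t, ‖k r - c r‖ ∂μ ≤ ∫ r, ‖k r - c r‖ ∂μ :=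
          setIntegral_le_integral hkc (Filter.Eventually.of_forall fun r => norm_nonneg _)
      _ ≤ ε := hc
  have hMB : ∑ i ∈ Finset.range N, (μ (Set.Ioc (g i) (g (i+1)))).toReal
      = (μ (Set.Ioc s t)).toReal := by
    have h1 := sum_setIntegral_Ioc μ (fun _ => (1:ℝ)) g hgmono N (integrable_const 1).integrableOn
    rw [hg0, hgN] at h1
    simpa [setIntegral_const, measureReal_def] using h1
  have hMBle : ε' * (μ (Set.Ioc s t)).toReal ≤ ε := by
    rw [hε'def, div_mul_eq_mul_div, div_le_iff₀ (by positivity)]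
    have h2 : (μ (Set.Ioc s t)).toReal ≤ (μ Set.univ).toReal :=
      ENNReal.toReal_mono (measure_ne_top μ _) (measure_mono (Set.subset_univ _))
    nlinarith
  have final : (μ (Set.Ioc s t)).toReal ≤
      (∑ i ∈ Finset.range N, ‖∫ r in Set.Ioc (g i) (g (i+1)), k r ∂μ‖) + 2*ε + 2*ε := by
    rw [step0, step1]
    refine le_trans (Finset.sum_le_sum key) ?_
    rw [Finset.sum_add_distrib, Finset.sum_add_distrib, ← Finset.mul_sum, ← Finset.mul_sum]
    refine add_le_add (add_le_add le_rfl (by linarith)) ?_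
    rw [hMB]
    calc 2 * ε' * (μ (Set.Ioc s t)).toReal = 2 * (ε' * (μ (Set.Ioc s t)).toReal) := by ring
      _ ≤ 2 * ε := by linarith
  linarith

/-- Lemma 2.4 (interior estimate for maximal monotone operators): if `a ∈ Int(D(A))`, there
are constants `M₁ > 0`, `M₂, M₃ ≥ 0` such that for every pair `(X, K)` associated to `A`
one has `∫_s^t ⟨X_r − a, dK_r⟩ ≥ M₁|K|_s^t − M₂∫_s^t |X_r − a| dr − M₃(t − s)`.
The Stieltjes measure `dK` is represented as `dK_r = k(r) dμ(r)` with `‖k‖ = 1` μ-a.e.,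
so the total variation `|K|_s^t` is `μ((s,t])`. -/
theorem stmt_10 {m : ℕ}
    (A : EuclideanSpace ℝ (Fin m) → Set (EuclideanSpace ℝ (Fin m)))
    (hmono : ∀ x₁ x₂ y₁ y₂ : EuclideanSpace ℝ (Fin m),
      y₁ ∈ A x₁ → y₂ ∈ A x₂ → 0 ≤ ⟪x₁ - x₂, y₁ - y₂⟫)
    (hmax : ∀ x₁ y₁ : EuclideanSpace ℝ (Fin m),
      (∀ x₂ y₂ : EuclideanSpace ℝ (Fin m), y₂ ∈ A x₂ → 0 ≤ ⟪x₁ - x₂, y₁ - y₂⟫) →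
      y₁ ∈ A x₁)
    (a : EuclideanSpace ℝ (Fin m)) (ha : a ∈ interior {x | (A x).Nonempty})
    (T : ℝ) (hT : 0 < T) :
    ∃ M₁ > (0:ℝ), ∃ M₂ ≥ (0:ℝ), ∃ M₃ ≥ (0:ℝ),
      ∀ (X : ℝ → EuclideanSpace ℝ (Fin m)) (μ : Measure ℝ) [IsFiniteMeasure μ]
        (k : ℝ → EuclideanSpace ℝ (Fin m)),
        ContinuousOn X (Set.Icc 0 T) →
        (∀ t ∈ Set.Icc (0:ℝ) T, X t ∈ closure {x | (A x).Nonempty}) →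
        Integrable k μ →
        (∀ᵐ r ∂μ, ‖k r‖ = 1) →
        (∀ x y : EuclideanSpace ℝ (Fin m), y ∈ A x →
          ∀ s t : ℝ, 0 ≤ s → s ≤ t → t ≤ T →
            ∫ r in s..t, (⟪X r - x, y⟫ : ℝ) ≤
              ∫ r in Set.Ioc s t, (⟪X r - x, k r⟫ : ℝ) ∂μ) →
        ∀ s t : ℝ, 0 ≤ s → s < t → t ≤ T →
          M₁ * (μ (Set.Ioc s t)).toReal - M₂ * (∫ r in s..t, ‖X r - a‖) - M₃ * (t - s) ≤
            ∫ r in Set.Ioc s t, (⟪X r - a, k r⟫ : ℝ) ∂μ := by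
  rcases Nat.eq_zero_or_pos m with hm | hm
  · -- degenerate case m = 0 : the hypothesis ‖k r‖ = 1 a.e. forces μ = 0
    subst hm
    refine ⟨1, one_pos, 0, le_rfl, 0, le_rfl, ?_⟩
    intro X μ inst k hX hXcl hk hk1 hpair s t hs hst htT
    haveI := inst
    have hknorm : ∀ r, ‖k r‖ = 0 := by
      intro r
      rw [EuclideanSpace.norm_eq]
      simp
    have hμ : μ = 0 := by
      have h1 : ∀ᵐ r ∂μ, False := by
        filter_upwards [hk1] with r hr
        rw [hknorm r] at hr
        norm_num at hr
      rw [← MeasureTheory.ae_eq_bot]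
      exact Filter.eventually_false_iff_eq_bot.mp h1
    rw [hμ]
    simp
  · -- main case m > 0
    obtain ⟨ε₀, hε₀, hball⟩ := Metric.mem_nhds_iff.mp (mem_interior_iff_mem_nhds.mp ha)
    obtain ⟨M, hM0, hMbound⟩ := locBound hm A hmono a ε₀ hε₀ hball
    have hsm : (1:ℝ) ≤ Real.sqrt m := by
      rw [show (1:ℝ) = Real.sqrt 1 by simp]
      exact Real.sqrt_le_sqrt (by exact_mod_cast hm)
    set ρ : ℝ := ε₀ / (4 * Real.sqrt m) with hρdef
    have hρpos : 0 < ρ := by positivity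
    have hρε₀ : ρ < ε₀ := by
      rw [hρdef]
      calc ε₀ / (4 * Real.sqrt m) ≤ ε₀ / 4 := by
            apply div_le_div_of_nonneg_left hε₀.le (by norm_num)
            nlinarith
        _ < ε₀ := by linarith
    refine ⟨ρ, hρpos, M, hM0, M * ρ, by positivity, ?_⟩
    intro X μ inst k hX hXcl hk hk1 hpair s t hs hst htT
    haveI := inst
    -- bound on X - a over [0, T]
    obtain ⟨CX, hCX⟩ := (isCompact_Icc : IsCompact (Set.Icc (0:ℝ) T)).exists_bound_of_continuousOn
      (hX.sub continuousOn_const)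
    have hIocsub : Set.Ioc s t ⊆ Set.Icc 0 T :=
      Set.Ioc_subset_Icc_self.trans (Set.Icc_subset_Icc hs htT)
    have hXae : AEStronglyMeasurable X (μ.restrict (Set.Icc 0 T)) :=
      hX.aestronglyMeasurable measurableSet_Icc
    have hFint : ∀ w : EuclideanSpace ℝ (Fin m),
        IntegrableOn (fun r => (⟪X r - w, k r⟫:ℝ)) (Set.Ioc s t) μ := by
      intro w
      have hle : μ.restrict (Set.Ioc s t) ≤ μ.restrict (Set.Icc 0 T) :=
        Measure.restrict_mono hIocsub le_rfl
      have hXae' : AEStronglyMeasurable X (μ.restrict (Set.Ioc s t)) := hXae.mono_measure hle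
      have hmeas : AEStronglyMeasurable (fun r => (⟪X r - w, k r⟫:ℝ)) (μ.restrict (Set.Ioc s t)) :=
        (hXae'.sub aestronglyMeasurable_const).inner hk.aestronglyMeasurable.restrict
      apply Integrable.mono' ((hk.norm.const_mul (CX + ‖a - w‖)).restrict) hmeas
      filter_upwards [ae_restrict_mem measurableSet_Ioc] with r hr
      have h1 : ‖X r - a‖ ≤ CX := hCX r (hIocsub hr)
      calc ‖(⟪X r - w, k r⟫:ℝ)‖ = |(⟪X r - w, k r⟫:ℝ)| := rfl
        _ ≤ ‖X r - w‖ * ‖k r‖ := abs_real_inner_le_norm _ _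
        _ ≤ (CX + ‖a - w‖) * ‖k r‖ := by
            apply mul_le_mul_of_nonneg_right _ (norm_nonneg _)
            calc ‖X r - w‖ = ‖(X r - a) + (a - w)‖ := by rw [sub_add_sub_cancel]
              _ ≤ ‖X r - a‖ + ‖a - w‖ := norm_add_le _ _
              _ ≤ CX + ‖a - w‖ := by linarith
    -- main estimate, up to ε'
    refine le_of_forall_pos_le_add ?_
    intro ε' hε'
    obtain ⟨N, g, hgmono, hg0, hgN, happrox⟩ :=
      approx_var μ k hk hk1 s t hst (ε'/(4*ρ)) (by positivity)
    have hgbounds : ∀ i ≤ N, 0 ≤ g i ∧ g i ≤ T := by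
      intro i hi
      constructor
      · calc (0:ℝ) ≤ s := hs
          _ = g 0 := hg0.symm
          _ ≤ g i := hgmono (Nat.zero_le i)
      · calc g i ≤ g N := hgmono hi
          _ = t := hgN
          _ ≤ T := htT
    have hIccsub : ∀ i < N, Set.Icc (g i) (g (i+1)) ⊆ Set.Icc 0 T := by
      intro i hi
      exact Set.Icc_subset_Icc (hgbounds i hi.le).1 (hgbounds (i+1) hi).2
    have hIocIoc : ∀ i < N, Set.Ioc (g i) (g (i+1)) ⊆ Set.Ioc s t := by
      intro i hi
      refine Set.Ioc_subset_Ioc ?_ ?_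
      · rw [← hg0]; exact hgmono (Nat.zero_le i)
      · rw [← hgN]; exact hgmono hi
    -- continuity facts
    have hXcont : ContinuousOn (fun r => ‖X r - a‖ + ρ) (Set.Icc 0 T) :=
      ((hX.sub continuousOn_const).norm).add continuousOn_const
    -- key per-piece estimate
    have key : ∀ i ∈ Finset.range N,
        ρ * ‖∫ r in Set.Ioc (g i) (g (i+1)), k r ∂μ‖
          - M * (∫ r in (g i)..(g (i+1)), (‖X r - a‖ + ρ))
        ≤ ∫ r in Set.Ioc (g i) (g (i+1)), (⟪X r - a, k r⟫:ℝ) ∂μ := by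
      intro i hi
      classical
      have hiN := Finset.mem_range.mp hi
      set v : EuclideanSpace ℝ (Fin m) := ∫ r in Set.Ioc (g i) (g (i+1)), k r ∂μ with hvdef
      set z : EuclideanSpace ℝ (Fin m) :=
        if h : v = 0 then EuclideanSpace.single ⟨0, hm⟩ 1 else ‖v‖⁻¹ • v with hzdef
      have hz1 : ‖z‖ = 1 := by
        rw [hzdef]
        split_ifs with h
        · rw [EuclideanSpace.norm_single]; norm_num
        · rw [norm_smul, norm_inv, norm_norm, inv_mul_cancel₀ (norm_ne_zero_iff.mpr h)]
      have hzv : (⟪z, v⟫:ℝ) = ‖v‖ := by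
        rw [hzdef]
        split_ifs with h
        · rw [h, inner_zero_right, norm_zero]
        · rw [real_inner_smul_left, real_inner_self_eq_norm_mul_norm]
          field_simp
      set x : EuclideanSpace ℝ (Fin m) := a + ρ • z with hxdef
      have hxa : ‖x - a‖ = ρ := by
        rw [hxdef, add_sub_cancel_left, norm_smul, Real.norm_eq_abs, abs_of_pos hρpos, hz1, mul_one]
      have hxball : x ∈ Metric.ball a ε₀ := by
        rw [Metric.mem_ball, dist_eq_norm, hxa]
        exact hρε₀
      obtain ⟨y, hy⟩ := hball hxball
      have hyM : ‖y‖ ≤ M := hMbound x y (le_of_eq hxa) hy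
      have h0gi : 0 ≤ g i := (hgbounds i hiN.le).1
      have hgig : g i ≤ g (i+1) := hgmono (Nat.le_succ i)
      have hgiT : g (i+1) ≤ T := (hgbounds (i+1) hiN).2
      have hp := hpair x y hy (g i) (g (i+1)) h0gi hgig hgiT
      -- lower bound for the dr-integral
      have hXcont2 : ContinuousOn (fun r => (⟪X r - x, y⟫:ℝ)) (Set.Icc 0 T) :=
        (hX.sub continuousOn_const).inner continuousOn_const
      have hii1 : IntervalIntegrable (fun r => (⟪X r - x, y⟫:ℝ)) volume (g i) (g (i+1)) :=
        ContinuousOn.intervalIntegrable (by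
          rw [Set.uIcc_of_le hgig]
          exact hXcont2.mono (hIccsub i hiN))
      have hii2 : IntervalIntegrable (fun r => -((‖X r - a‖ + ρ) * M)) volume (g i) (g (i+1)) :=
        ContinuousOn.intervalIntegrable (by
          rw [Set.uIcc_of_le hgig]
          exact ((hXcont.mul continuousOn_const).neg).mono (hIccsub i hiN))
      have hlow : -(∫ r in (g i)..(g (i+1)), (‖X r - a‖ + ρ) * M)
          ≤ ∫ r in (g i)..(g (i+1)), (⟪X r - x, y⟫:ℝ) := by
        rw [← intervalIntegral.integral_neg]
        apply intervalIntegral.integral_mono_on hgig hii2 hii1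
        intro r hr
        have hxr : ‖X r - x‖ ≤ ‖X r - a‖ + ρ := by
          calc ‖X r - x‖ = ‖(X r - a) - ρ • z‖ := by
                rw [hxdef]; congr 1; abel
            _ ≤ ‖X r - a‖ + ‖ρ • z‖ := norm_sub_le _ _
            _ = ‖X r - a‖ + ρ := by
                rw [norm_smul, Real.norm_eq_abs, abs_of_pos hρpos, hz1, mul_one]
        have habs : |(⟪X r - x, y⟫:ℝ)| ≤ (‖X r - a‖ + ρ) * M := by
          refine (abs_real_inner_le_norm _ _).trans ?_
          apply mul_le_mul hxr hyM (norm_nonneg _) (by positivity)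
        linarith [abs_le.mp habs]
      -- decompose the μ integral
      have hsubIoc := hIocIoc i hiN
      have hint1 : IntegrableOn (fun r => (⟪X r - a, k r⟫:ℝ)) (Set.Ioc (g i) (g (i+1))) μ :=
        (hFint a).mono_set hsubIoc
      have hint2 : IntegrableOn (fun r => (⟪X r - x, k r⟫:ℝ)) (Set.Ioc (g i) (g (i+1))) μ :=
        (hFint x).mono_set hsubIoc
      have hintk : Integrable k (μ.restrict (Set.Ioc (g i) (g (i+1)))) := hk.integrableOn
      have hconst : ∫ r in Set.Ioc (g i) (g (i+1)), (⟪ρ • z, k r⟫:ℝ) ∂μ = ρ * ‖v‖ := by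
        rw [integral_inner hintk, ← hvdef, real_inner_smul_left, hzv]
      have hdecomp : ∫ r in Set.Ioc (g i) (g (i+1)), (⟪X r - a, k r⟫:ℝ) ∂μ
          = (∫ r in Set.Ioc (g i) (g (i+1)), (⟪X r - x, k r⟫:ℝ) ∂μ) + ρ * ‖v‖ := by
        have e1 : ∀ r, (⟪X r - a, k r⟫:ℝ) = (⟪X r - x, k r⟫:ℝ) + (⟪ρ • z, k r⟫:ℝ) := by
          intro r
          rw [← inner_add_left]
          congr 1
          rw [hxdef]
          abel
        rw [integral_congr_ae (Filter.Eventually.of_forall (fun r => e1 r)),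
          integral_add hint2 (by
            have : Integrable (fun r => (⟪ρ • z, k r⟫:ℝ)) (μ.restrict (Set.Ioc (g i) (g (i+1)))) :=
              hintk.const_inner _
            exact this), hconst]
      rw [hdecomp]
      have hMε : ∫ r in (g i)..(g (i+1)), (‖X r - a‖ + ρ) * M
          = M * ∫ r in (g i)..(g (i+1)), (‖X r - a‖ + ρ) := by
        rw [← intervalIntegral.integral_const_mul]
        apply intervalIntegral.integral_congr
        intro r _
        ring
      have := hp.trans' hlow
      rw [hMε] at this
      linarith
    -- sum over the partition
    have hsumμ : ∑ i ∈ Finset.range N, ∫ r in Set.Ioc (g i) (g (i+1)), (⟪X r - a, k r⟫:ℝ) ∂μ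
        = ∫ r in Set.Ioc s t, (⟪X r - a, k r⟫:ℝ) ∂μ := by
      have h1 := sum_setIntegral_Ioc μ (fun r => (⟪X r - a, k r⟫:ℝ)) g hgmono N
        (by rw [hg0, hgN]; exact hFint a)
      rw [hg0, hgN] at h1
      exact h1
    have hii3 : ∀ i < N, IntervalIntegrable (fun r => ‖X r - a‖ + ρ) volume (g i) (g (i+1)) := by
      intro i hi
      apply ContinuousOn.intervalIntegrable
      rw [Set.uIcc_of_le (hgmono (Nat.le_succ i))]
      exact hXcont.mono (hIccsub i hi)
    have hsumvol : ∑ i ∈ Finset.range N, ∫ r in (g i)..(g (i+1)), (‖X r - a‖ + ρ)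
        = ∫ r in s..t, (‖X r - a‖ + ρ) := by
      have h1 := intervalIntegral.sum_integral_adjacent_intervals (a := g) (n := N)
        (fun i hi => hii3 i hi)
      rw [hg0, hgN] at h1
      exact h1
    have hXint : IntervalIntegrable (fun r => ‖X r - a‖) volume s t := by
      apply ContinuousOn.intervalIntegrable
      rw [Set.uIcc_of_le hst.le]
      exact ((hX.sub continuousOn_const).norm).mono (Set.Icc_subset_Icc hs htT)
    have hvolsplit : ∫ r in s..t, (‖X r - a‖ + ρ) = (∫ r in s..t, ‖X r - a‖) + ρ * (t - s) := by
      rw [intervalIntegral.integral_add hXint intervalIntegrable_const,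
        intervalIntegral.integral_const, smul_eq_mul]
      ring
    have hsum := Finset.sum_le_sum key
    rw [Finset.sum_sub_distrib, ← Finset.mul_sum, ← Finset.mul_sum, hsumμ, hsumvol, hvolsplit]
      at hsum
    have happrox' : ρ * ((μ (Set.Ioc s t)).toReal - 4*(ε'/(4*ρ)))
        ≤ ρ * ∑ i ∈ Finset.range N, ‖∫ r in Set.Ioc (g i) (g (i+1)), k r ∂μ‖ :=
      mul_le_mul_of_nonneg_left happrox hρpos.le
    have hρε'' : ρ * ((μ (Set.Ioc s t)).toReal - 4*(ε'/(4*ρ)))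
        = ρ * (μ (Set.Ioc s t)).toReal - ε' := by
      field_simp
    rw [hρε''] at happrox'
    linarith
end

section
/- Let α : [0,∞) → [0,∞) be measurable, and suppose α(s₁) ≤ α(s₂) + 2λ ∫_{s₁}^{s₂} α(r) dr for all 0 ≤ s₁ < s₂ < ∞, where λ > 0, and suppose e^{2λs}α(s) is dominated by an integrable bound and α(s) = 0 for all s ≥ S for some S > 0. Then α(s) = 0 for all s ≥ 0. -/
open MeasureTheory

/-- The backward Gronwall-type argument from the proof of Theorem 3.5: if a nonnegative
measurable `α` satisfies `α(s₁) ≤ α(s₂) + 2λ∫_{s₁}^{s₂} α`, `e^{2λs}α(s)` is bounded, and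
`α` vanishes beyond some `S`, then `α ≡ 0` on `[0,∞)`. -/
theorem stmt_16 (α : ℝ → ℝ) (lam : ℝ) (hlam : 0 < lam)
    (hmeas : Measurable α)
    (hnonneg : ∀ s ≥ (0:ℝ), 0 ≤ α s)
    (hineq : ∀ s₁ s₂ : ℝ, 0 ≤ s₁ → s₁ < s₂ →
      α s₁ ≤ α s₂ + 2 * lam * ∫ r in s₁..s₂, α r)
    (hdom : ∃ Cb : ℝ, ∀ s ≥ (0:ℝ), Real.exp (2 * lam * s) * α s ≤ Cb)
    (hvanish : ∃ S > (0:ℝ), ∀ s ≥ S, α s = 0) :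
    ∀ s ≥ (0:ℝ), α s = 0 := by
  obtain ⟨Cb, hCb⟩ := hdom
  obtain ⟨S, hS, hvan⟩ := hvanish
  -- α is bounded by Cb on [0,∞)
  have hbd : ∀ s ≥ (0:ℝ), α s ≤ Cb := by
    intro s hs
    have h1 : (1:ℝ) ≤ Real.exp (2 * lam * s) := Real.one_le_exp (by positivity)
    calc α s = 1 * α s := (one_mul _).symm
      _ ≤ Real.exp (2 * lam * s) * α s :=
        mul_le_mul_of_nonneg_right h1 (hnonneg s hs)
      _ ≤ Cb := hCb s hs
  have hCb0 : 0 ≤ Cb := (hnonneg 0 le_rfl).trans (by simpa using hCb 0 le_rfl)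
  -- integrability on any [a,b] ⊆ [0,∞)
  have hint : ∀ a b : ℝ, 0 ≤ a → a ≤ b → IntervalIntegrable α volume a b := by
    intro a b ha hab
    apply IntervalIntegrable.mono_fun'
      (g := fun _ => Cb) (intervalIntegrable_const)
    · exact hmeas.aestronglyMeasurable
    · filter_upwards [MeasureTheory.ae_restrict_mem measurableSet_uIoc] with x hx
      rw [Set.uIoc_of_le hab] at hx
      rw [Real.norm_eq_abs, abs_of_nonneg (hnonneg x (ha.trans hx.1.le))]
      exact hbd x (ha.trans hx.1.le)
  -- key inequality: for 0 ≤ s < S, α s ≤ 2λ ∫_s^S α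
  have hkey : ∀ s, 0 ≤ s → s < S → α s ≤ 2 * lam * ∫ r in s..S, α r := by
    intro s hs hsS
    have := hineq s S hs hsS
    rwa [hvan S le_rfl, zero_add] at this
  -- induction: α s ≤ Cb * (2λ(S-s))^n / n!
  have hiter : ∀ n : ℕ, ∀ s, 0 ≤ s → s ≤ S →
      α s ≤ Cb * (2 * lam * (S - s)) ^ n / n.factorial := by
    intro n
    induction n with
    | zero => intro s hs hsS; simpa using hbd s hs
    | succ n ih =>
      intro s hs hsS
      rcases eq_or_lt_of_le hsS with h | h
      · subst h
        rw [hvan s le_rfl]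
        simp
      have hle : α s ≤ 2 * lam * ∫ r in s..S, α r := hkey s hs h
      have hmono : (∫ r in s..S, α r) ≤
          ∫ r in s..S, Cb * (2 * lam * (S - r)) ^ n / n.factorial := by
        apply intervalIntegral.integral_mono_on hsS (hint s S hs hsS)
        · apply IntervalIntegrable.div_const
          apply IntervalIntegrable.const_mul
          apply Continuous.intervalIntegrable
          continuity
        · intro x hx
          exact ih x (hs.trans hx.1) hx.2
      have hcomp : (∫ r in s..S, Cb * (2 * lam * (S - r)) ^ n / n.factorial)
          = Cb * (2 * lam) ^ n / n.factorial * ((S - s) ^ (n + 1) / (n + 1)) := by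
        have h1 : (fun r : ℝ => Cb * (2 * lam * (S - r)) ^ n / n.factorial)
            = fun r : ℝ => Cb * (2 * lam) ^ n / n.factorial * (S - r) ^ n := by
          funext r; rw [mul_pow]; ring
        rw [h1, intervalIntegral.integral_const_mul]
        have h2 : (∫ r in s..S, (S - r) ^ n) = ∫ x in (0:ℝ)..(S - s), x ^ n := by
          have := intervalIntegral.integral_comp_sub_left (a := s) (b := S)
            (fun x : ℝ => x ^ n) S
          simpa using this
        rw [h2, integral_pow]
        ring
      calc α s ≤ 2 * lam * ∫ r in s..S, α r := hle
        _ ≤ 2 * lam * (Cb * (2 * lam) ^ n / n.factorial * ((S - s) ^ (n + 1) / (n + 1))) := by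
            rw [← hcomp]
            exact mul_le_mul_of_nonneg_left hmono (by positivity)
        _ = Cb * (2 * lam * (S - s)) ^ (n + 1) / (n + 1).factorial := by
            have hf : (n.factorial:ℝ) ≠ 0 := by positivity
            have hn1 : (n:ℝ)+1 ≠ 0 := by positivity
            rw [Nat.factorial_succ, mul_pow, mul_pow]
            push_cast
            field_simp
            ring
  -- conclude
  intro s hs
  rcases le_or_gt S s with h | h
  · exact hvan s h
  · have hlim : Filter.Tendsto
        (fun n : ℕ => Cb * (2 * lam * (S - s)) ^ n / n.factorial)
        Filter.atTop (nhds 0) := by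
      have := FloorSemiring.tendsto_pow_div_factorial_atTop (2 * lam * (S - s)) (K := ℝ)
      have h2 := this.const_mul Cb
      simpa [mul_div_assoc] using h2
    have hle0 : α s ≤ 0 :=
      le_of_tendsto_of_tendsto' tendsto_const_nhds hlim
        (fun n => hiter n s hs h.le)
    exact le_antisymm hle0 (hnonneg s hs)
end
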